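/- For the nearest-neighbor random walk on (Z_r)^n with r ≥ 3 and degree Ω = 2n, the return probability after 2i steps satisfies (1/V) ∑_{k ∈ dual torus} D̂(k)^{2i} ≤ e·2^i·i^{2i} / Ω^i. -/

import Mathlib

open Finset

lemma sum_cos_range_eq_zero (r : ℕ) (hr : 2 ≤ r) :
    ∑ t ∈ Finset.range r, Real.cos (2 * Real.pi / r * t) = 0 := by
  have hr0 : (r : ℂ) ≠ 0 := Nat.cast_ne_zero.mpr (by omega)
  have hprim := Complex.isPrimitiveRoot_exp r (by omega)
  have hzero : ∑ t ∈ Finset.range r, Complex.exp (2 * Real.pi * Complex.I / r) ^ t = 0 :=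
    hprim.geom_sum_eq_zero hr
  have key : ∀ t : ℕ, Real.cos (2 * Real.pi / r * t)
      = (Complex.exp (2 * Real.pi * Complex.I / r) ^ t).re := by
    intro t
    rw [← Complex.exp_nat_mul]
    have : (t : ℂ) * (2 * Real.pi * Complex.I / r) = ((2 * Real.pi / r * t : ℝ) : ℂ) * Complex.I := by
      push_cast
      field_simp
    rw [this, Complex.exp_ofReal_mul_I_re]
  simp_rw [key]
  rw [← Complex.re_sum, hzero, Complex.zero_re]

lemma sum_cos_zmod_eq_zero (r : ℕ) [NeZero r] (hr : 2 ≤ r) :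
    ∑ a : ZMod r, Real.cos (2 * Real.pi / r * (a.val : ℝ)) = 0 := by
  rw [← sum_cos_range_eq_zero r hr]
  apply Finset.sum_nbij' (i := fun a : ZMod r => a.val) (j := fun t : ℕ => (t : ZMod r))
  · intro a _; exact Finset.mem_range.mpr a.val_lt
  · intro t _; exact Finset.mem_univ _
  · intro a _; exact ZMod.natCast_rightInverse a
  · intro t ht; exact ZMod.val_cast_of_lt (Finset.mem_range.mp ht)
  · intro a _; rfl

/-- The dot product `k · x` on the torus `(ℤ_r)^n`, with `k` in the dual torus
identified with the torus itself via `k_j = 2π (k j)/r`. -/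
noncomputable def torusDot (r n : ℕ) (k x : Fin n → ZMod r) : ℝ :=
  (2 * Real.pi / r) * ∑ j, ((k j).val : ℝ) * ((x j).val : ℝ)

open scoped Classical in
lemma fourier_eval (r n : ℕ) [NeZero r] (hr : 3 ≤ r)
    (D : (Fin n → ZMod r) → ℝ)
    (hD : ∀ x : Fin n → ZMod r,
      D x = if (∃ j, (x j = 1 ∨ x j = -1) ∧ ∀ l, l ≠ j → x l = 0)
        then 1 / (2 * (n : ℝ)) else 0) (k : Fin n → ZMod r) :
    ∑ x, D x * Real.cos (torusDot r n k x)
      = (1 / (n : ℝ)) * ∑ j, Real.cos (2 * Real.pi / r * ((k j).val : ℝ)) := by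
  have hfact : Fact (1 < r) := ⟨by omega⟩
  have hr0 : (r : ℝ) ≠ 0 := Nat.cast_ne_zero.mpr (by omega)
  have h1ne0 : (1 : ZMod r) ≠ 0 := one_ne_zero
  have hneg1ne0 : (-1 : ZMod r) ≠ 0 := neg_ne_zero.mpr one_ne_zero
  have h1neneg1 : (1 : ZMod r) ≠ -1 := by
    intro h
    have h2 : (2 : ZMod r) = 0 := by linear_combination h
    have : ((2 : ℕ) : ZMod r) = 0 := by exact_mod_cast h2
    rw [ZMod.natCast_eq_zero_iff] at this
    exact absurd (Nat.le_of_dvd (by norm_num) this) (by omega)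
  -- the point masses
  set e : Fin n × Bool → (Fin n → ZMod r) :=
    fun p => fun l => if l = p.1 then (if p.2 then 1 else -1) else 0 with he
  have heval : ∀ p l, e p l = if l = p.1 then (if p.2 then 1 else -1) else 0 := fun _ _ => rfl
  have hinj : Function.Injective e := by
    intro p q h
    have h1 : e p p.1 = e q p.1 := congrFun h p.1
    rw [heval, heval, if_pos rfl] at h1
    by_cases hpq : p.1 = q.1
    · have : p.2 = q.2 := by
        rw [if_pos hpq] at h1
        cases hp : p.2 <;> cases hq : q.2 <;> simp [hp, hq] at h1 ⊢ <;>
          first | rfl | exact absurd h1.symm h1neneg1 | exact absurd h1 h1neneg1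
      exact Prod.ext hpq this
    · rw [if_neg hpq] at h1
      cases hp : p.2 <;> rw [hp] at h1
      · exact absurd h1 hneg1ne0
      · exact absurd h1 h1ne0
  have hn0 : (n : ℝ) ≠ 0 ∨ True := Or.inr trivial
  -- rewrite the sum as a sum over the filter
  have hsum1 : ∑ x, D x * Real.cos (torusDot r n k x)
      = ∑ x ∈ Finset.univ.filter (fun x : Fin n → ZMod r =>
          ∃ j, (x j = 1 ∨ x j = -1) ∧ ∀ l, l ≠ j → x l = 0),
          (1 / (2 * (n : ℝ))) * Real.cos (torusDot r n k x) := by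
    rw [Finset.sum_filter]
    apply Finset.sum_congr rfl
    intro x _
    rw [hD x, ite_mul, zero_mul]
  have hset : (Finset.univ.filter (fun x : Fin n → ZMod r =>
      ∃ j, (x j = 1 ∨ x j = -1) ∧ ∀ l, l ≠ j → x l = 0)) = Finset.univ.image e := by
    ext x
    simp only [Finset.mem_filter, Finset.mem_univ, true_and, Finset.mem_image]
    constructor
    · rintro ⟨j, hj, hz⟩
      rcases hj with h1 | h1
      · refine ⟨(j, true), ?_⟩
        funext l
        by_cases hl : l = j
        · subst hl; simp [heval, h1]
        · simp [heval, hl, hz l hl]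
      · refine ⟨(j, false), ?_⟩
        funext l
        by_cases hl : l = j
        · subst hl; simp [heval, h1]
        · simp [heval, hl, hz l hl]
    · rintro ⟨p, rfl⟩
      refine ⟨p.1, ?_, ?_⟩
      · cases hb : p.2 <;> simp [heval, hb]
      · intro l hl; simp [heval, hl]
  have hsum2 : ∑ x ∈ Finset.univ.image e,
        (1 / (2 * (n : ℝ))) * Real.cos (torusDot r n k x)
      = ∑ p : Fin n × Bool, (1 / (2 * (n : ℝ))) * Real.cos (torusDot r n k (e p)) := by
    rw [Finset.sum_image (fun a _ b _ h => hinj h)]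
  -- value of -1
  have hvalneg : ((-1 : ZMod r)).val = r - 1 := by
    have hcast : ((r - 1 : ℕ) : ZMod r) = -1 := by
      have h1r : 1 ≤ r := by omega
      push_cast [Nat.cast_sub h1r]
      rw [ZMod.natCast_self]
      ring
    rw [← hcast, ZMod.val_cast_of_lt (by omega)]
  have hdot : ∀ (j : Fin n) (b : Bool),
      Real.cos (torusDot r n k (e (j, b)))
        = Real.cos (2 * Real.pi / r * ((k j).val : ℝ)) := by
    intro j b
    have hsumdot : ∑ l, ((k l).val : ℝ) * (((e (j, b)) l).val : ℝ)
        = ((k j).val : ℝ) * (((if b then (1 : ZMod r) else -1)).val : ℝ) := by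
      rw [Finset.sum_eq_single j]
      · simp [heval]
      · intro l _ hl; simp [heval, hl]
      · simp
    rw [torusDot, hsumdot]
    cases b
    · simp only [if_neg Bool.false_ne_true, hvalneg]
      have hcastr : ((r - 1 : ℕ) : ℝ) = (r : ℝ) - 1 := by
        push_cast [Nat.cast_sub (show 1 ≤ r by omega)]; ring
      rw [hcastr]
      have harg : 2 * Real.pi / r * (((k j).val : ℝ) * ((r : ℝ) - 1))
          = ((k j).val : ℝ) * (2 * Real.pi) - 2 * Real.pi / r * ((k j).val : ℝ) := by
        field_simp
      rw [harg, Real.cos_nat_mul_two_pi_sub]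
    · simp [ZMod.val_one r]
  have hfinal : ∑ p : Fin n × Bool, (1 / (2 * (n : ℝ))) * Real.cos (torusDot r n k (e p))
      = (1 / (n : ℝ)) * ∑ j, Real.cos (2 * Real.pi / r * ((k j).val : ℝ)) := by
    rw [Fintype.sum_prod_type, Finset.mul_sum]
    apply Finset.sum_congr rfl
    intro j _
    rw [Fintype.sum_bool, hdot j true, hdot j false]
    by_cases hn : (n : ℝ) = 0
    · simp [hn]
    · field_simp
      ring
  rw [hsum1, hset, hsum2, hfinal]

open scoped Classical in
lemma moment_bound (r n i : ℕ) [NeZero r] (hr : 2 ≤ r) (hn : 1 ≤ n) :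
    ∑ k : Fin n → ZMod r,
        (∑ j, Real.cos (2 * Real.pi / r * (((k j).val : ℝ)))) ^ (2 * i)
      ≤ Real.exp 1 * (n : ℝ) ^ i * (i : ℝ) ^ (2 * i) * (r : ℝ) ^ n := by
  set c : ZMod r → ℝ := fun a => Real.cos (2 * Real.pi / r * (a.val : ℝ)) with hc
  set S : ℕ → ℝ := fun m => ∑ a : ZMod r, (c a) ^ m with hSdef
  have hS1 : S 1 = 0 := by
    show ∑ a : ZMod r, (c a) ^ 1 = 0
    simp only [pow_one]
    exact sum_cos_zmod_eq_zero r hr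
  have hSabs : ∀ m, |S m| ≤ (r : ℝ) := by
    intro m
    calc |S m| ≤ ∑ a : ZMod r, |(c a) ^ m| := Finset.abs_sum_le_sum_abs _ _
      _ ≤ ∑ _a : ZMod r, (1 : ℝ) := by
          apply Finset.sum_le_sum
          intro a _
          rw [abs_pow]
          exact pow_le_one₀ (abs_nonneg _) (Real.abs_cos_le_one _)
      _ = (r : ℝ) := by simp [ZMod.card]
  set m : (Fin (2 * i) → Fin n) → Fin n → ℕ :=
    fun f j => (Finset.univ.filter (fun t => f t = j)).card with hm
  -- expansion
  have expand : ∀ k : Fin n → ZMod r, (∑ j, c (k j)) ^ (2 * i)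
      = ∑ f : Fin (2 * i) → Fin n, ∏ j, (c (k j)) ^ (m f j) := by
    intro k
    rw [Finset.sum_pow', Fintype.piFinset_univ]
    apply Finset.sum_congr rfl
    intro f _
    rw [← Finset.prod_fiberwise Finset.univ f (fun t => c (k (f t)))]
    apply Finset.prod_congr rfl
    intro j _
    rw [Finset.prod_congr rfl (fun t ht => ?_), Finset.prod_const]
    rw [(Finset.mem_filter.mp ht).2]
  have hswap : ∑ k : Fin n → ZMod r, (∑ j, c (k j)) ^ (2 * i)
      = ∑ f : Fin (2 * i) → Fin n, ∏ j, S (m f j) := by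
    simp_rw [expand]
    rw [Finset.sum_comm]
    apply Finset.sum_congr rfl
    intro f _
    rw [← Fintype.piFinset_univ]
    exact Finset.sum_prod_piFinset Finset.univ (fun j a => c a ^ m f j)
  rw [hswap]
  set P : (Fin (2 * i) → Fin n) → Prop := fun f => ∀ j, m f j ≠ 1 with hP
  have hvanish : ∀ f, ¬ P f → ∏ j, S (m f j) = 0 := by
    intro f hf
    obtain ⟨j, hj⟩ := not_forall.mp hf
    exact Finset.prod_eq_zero (Finset.mem_univ j) (by rw [not_not.mp hj]; exact hS1)
  have hfilter : ∑ f : Fin (2 * i) → Fin n, ∏ j, S (m f j)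
      = ∑ f ∈ Finset.univ.filter P, ∏ j, S (m f j) := by
    symm
    apply Finset.sum_subset (Finset.filter_subset _ _)
    intro f _ hf
    exact hvanish f (by simpa using hf)
  rw [hfilter]
  have hterm : ∀ f ∈ Finset.univ.filter P, ∏ j, S (m f j) ≤ (r : ℝ) ^ n := by
    intro f _
    calc ∏ j, S (m f j) ≤ |∏ j, S (m f j)| := le_abs_self _
      _ = ∏ j, |S (m f j)| := Finset.abs_prod _ _
      _ ≤ ∏ _j : Fin n, (r : ℝ) := Finset.prod_le_prod (fun _ _ => abs_nonneg _)
          (fun j _ => hSabs _)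
      _ = (r : ℝ) ^ n := by simp
  calc ∑ f ∈ Finset.univ.filter P, ∏ j, S (m f j)
      ≤ ∑ _f ∈ Finset.univ.filter P, (r : ℝ) ^ n := Finset.sum_le_sum hterm
    _ = ((Finset.univ.filter P).card : ℝ) * (r : ℝ) ^ n := by
        rw [Finset.sum_const, nsmul_eq_mul]
    _ ≤ (Real.exp 1 * (n : ℝ) ^ i * (i : ℝ) ^ (2 * i)) * (r : ℝ) ^ n := by
        apply mul_le_mul_of_nonneg_right _ (by positivity)
        -- counting good functions
        have hsubset : Finset.univ.filter P ⊆ (Finset.range (i + 1)).biUnion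
            (fun ℓ => (Finset.powersetCard ℓ (Finset.univ : Finset (Fin n))).biUnion
              (fun s => Fintype.piFinset fun _ : Fin (2 * i) => s)) := by
          intro f hf
          have hPf : P f := (Finset.mem_filter.mp hf).2
          set s := Finset.image f Finset.univ with hs
          have himg : ∀ j ∈ s, 2 ≤ m f j := by
            intro j hj
            obtain ⟨t, _, ht⟩ := Finset.mem_image.mp hj
            have h1 : 0 < m f j := Finset.card_pos.mpr
              ⟨t, Finset.mem_filter.mpr ⟨Finset.mem_univ t, ht⟩⟩
            have h2 := hPf j
            omega
          have hcount : (2 * i) = ∑ j ∈ s, m f j := by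
            have := Finset.card_eq_sum_card_fiberwise
              (s := (Finset.univ : Finset (Fin (2 * i)))) (t := s) (f := f)
              (fun t _ => Finset.mem_image_of_mem f (Finset.mem_univ t))
            simpa using this
          have hsl : s.card ≤ i := by
            have h2 : 2 * s.card ≤ ∑ j ∈ s, m f j := by
              calc 2 * s.card = ∑ _j ∈ s, 2 := by
                    rw [Finset.sum_const, smul_eq_mul, mul_comm]
                _ ≤ ∑ j ∈ s, m f j := Finset.sum_le_sum himg
            omega
          refine Finset.mem_biUnion.mpr ⟨s.card, Finset.mem_range.mpr (by omega),
            Finset.mem_biUnion.mpr ⟨s, Finset.mem_powersetCard.mpr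
              ⟨Finset.subset_univ _, rfl⟩, Fintype.mem_piFinset.mpr
              (fun t => Finset.mem_image_of_mem f (Finset.mem_univ t))⟩⟩
        have hcardnat : (Finset.univ.filter P).card
            ≤ ∑ ℓ ∈ Finset.range (i + 1), n.choose ℓ * ℓ ^ (2 * i) := by
          calc (Finset.univ.filter P).card ≤ _ := Finset.card_le_card hsubset
            _ ≤ ∑ ℓ ∈ Finset.range (i + 1),
                ((Finset.powersetCard ℓ (Finset.univ : Finset (Fin n))).biUnion
                  (fun s => Fintype.piFinset fun _ : Fin (2 * i) => s)).card :=
                Finset.card_biUnion_le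
            _ ≤ ∑ ℓ ∈ Finset.range (i + 1), n.choose ℓ * ℓ ^ (2 * i) := by
                apply Finset.sum_le_sum
                intro ℓ _
                calc ((Finset.powersetCard ℓ (Finset.univ : Finset (Fin n))).biUnion
                      (fun s => Fintype.piFinset fun _ : Fin (2 * i) => s)).card
                    ≤ ∑ s ∈ Finset.powersetCard ℓ (Finset.univ : Finset (Fin n)),
                        (Fintype.piFinset fun _ : Fin (2 * i) => s).card :=
                      Finset.card_biUnion_le
                  _ = ∑ s ∈ Finset.powersetCard ℓ (Finset.univ : Finset (Fin n)),
                        ℓ ^ (2 * i) := by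
                      apply Finset.sum_congr rfl
                      intro s hs
                      rw [Fintype.card_piFinset]
                      rw [(Finset.mem_powersetCard.mp hs).2]
                      simp
                  _ = n.choose ℓ * ℓ ^ (2 * i) := by
                      rw [Finset.sum_const, smul_eq_mul, Finset.card_powersetCard]
                      simp
        have hcardreal : ((Finset.univ.filter P).card : ℝ)
            ≤ ∑ ℓ ∈ Finset.range (i + 1), (n.choose ℓ : ℝ) * (ℓ : ℝ) ^ (2 * i) := by
          calc ((Finset.univ.filter P).card : ℝ)
              ≤ ((∑ ℓ ∈ Finset.range (i + 1), n.choose ℓ * ℓ ^ (2 * i) : ℕ) : ℝ) := by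
                exact_mod_cast hcardnat
            _ = _ := by push_cast; ring
        refine le_trans hcardreal ?_
        have hterm2 : ∀ ℓ ∈ Finset.range (i + 1),
            (n.choose ℓ : ℝ) * (ℓ : ℝ) ^ (2 * i)
              ≤ ((n : ℝ) ^ i / (Nat.factorial ℓ)) * (i : ℝ) ^ (2 * i) := by
          intro ℓ hℓ
          have hℓi : ℓ ≤ i := by
            have := Finset.mem_range.mp hℓ; omega
          apply mul_le_mul
          · calc (n.choose ℓ : ℝ) ≤ (n : ℝ) ^ ℓ / (Nat.factorial ℓ) :=
                Nat.choose_le_pow_div ℓ n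
              _ ≤ (n : ℝ) ^ i / (Nat.factorial ℓ) := by
                have h1n : (1 : ℝ) ≤ (n : ℝ) := by exact_mod_cast hn
                gcongr
          · exact pow_le_pow_left₀ (by positivity) (by exact_mod_cast hℓi) _
          · positivity
          · positivity
        calc ∑ ℓ ∈ Finset.range (i + 1), (n.choose ℓ : ℝ) * (ℓ : ℝ) ^ (2 * i)
            ≤ ∑ ℓ ∈ Finset.range (i + 1),
                ((n : ℝ) ^ i / (Nat.factorial ℓ)) * (i : ℝ) ^ (2 * i) :=
              Finset.sum_le_sum hterm2
          _ = (n : ℝ) ^ i * (i : ℝ) ^ (2 * i) *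
                ∑ ℓ ∈ Finset.range (i + 1), 1 / (Nat.factorial ℓ : ℝ) := by
              rw [Finset.mul_sum]
              apply Finset.sum_congr rfl
              intro ℓ _
              ring
          _ ≤ (n : ℝ) ^ i * (i : ℝ) ^ (2 * i) * Real.exp 1 := by
              apply mul_le_mul_of_nonneg_left _ (by positivity)
              have := Real.sum_le_exp_of_nonneg (x := 1) (by norm_num) (i + 1)
              simpa using this
          _ = Real.exp 1 * (n : ℝ) ^ i * (i : ℝ) ^ (2 * i) := by ring

open scoped Classical in
theorem nn_return_probability_bound (r n : ℕ) [NeZero r] (hr : 3 ≤ r) (hn : 1 ≤ n)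
    (i : ℕ)
    (D : (Fin n → ZMod r) → ℝ)
    (hD : ∀ x : Fin n → ZMod r,
      D x = if (∃ j, (x j = 1 ∨ x j = -1) ∧ ∀ l, l ≠ j → x l = 0)
        then 1 / (2 * (n : ℝ)) else 0) :
    (1 / (r : ℝ) ^ n) * ∑ k : Fin n → ZMod r,
        (∑ x, D x * Real.cos (torusDot r n k x)) ^ (2 * i)
      ≤ Real.exp 1 * 2 ^ i * (i : ℝ) ^ (2 * i) / (2 * (n : ℝ)) ^ i := by
  have hr2 : 2 ≤ r := by omega
  have hnR : (n : ℝ) ≠ 0 := Nat.cast_ne_zero.mpr (by omega)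
  have hrR : (r : ℝ) ≠ 0 := Nat.cast_ne_zero.mpr (by omega)
  have hF := fourier_eval r n hr D hD
  simp only [hF, mul_pow]
  rw [← Finset.mul_sum]
  have hT := moment_bound r n i hr2 hn
  calc (1 / (r : ℝ) ^ n) * ((1 / (n : ℝ)) ^ (2 * i) *
        ∑ k : Fin n → ZMod r,
          (∑ j, Real.cos (2 * Real.pi / r * (((k j).val : ℝ)))) ^ (2 * i))
      ≤ (1 / (r : ℝ) ^ n) * ((1 / (n : ℝ)) ^ (2 * i) *
          (Real.exp 1 * (n : ℝ) ^ i * (i : ℝ) ^ (2 * i) * (r : ℝ) ^ n)) := by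
        gcongr
    _ = Real.exp 1 * 2 ^ i * (i : ℝ) ^ (2 * i) / (2 ^ i * (n : ℝ) ^ i) := by
        rw [pow_mul, pow_mul]
        have hni : ((n : ℝ) ^ i) ≠ 0 := pow_ne_zero _ hnR
        have hrn : ((r : ℝ) ^ n) ≠ 0 := pow_ne_zero _ hrR
        field_simp
        ring_nf
        rw [← mul_pow, mul_inv_cancel₀ hnR, one_pow]
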